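/- (De Finetti's consistency/Dutch book theorem, finite case) Let A be a finite boolean algebra with homomorphisms η₁,…,ηₙ into {0,1} (one per atom), E = {h₁,…,h_m} ⊆ A, and β : E → [0,1]. Then exactly one of the following holds: (i) there is a function s : E → ℝ such that Σⱼ s(hⱼ)(β(hⱼ) − ηᵢ(hⱼ)) < 0 for every i = 1,…,n; (ii) β extends to a state of A. Equivalently, β is consistent (no such s exists) iff β extends to a state of A. -/

import Mathlib

/-- `f` is a homomorphism of boolean algebras. -/
def IsBAHom {A B : Type*} [BooleanAlgebra A] [BooleanAlgebra B] (f : A → B) : Prop :=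
  (∀ x : A, f xᶜ = (f x)ᶜ) ∧ (∀ x y : A, f (x ⊓ y) = f x ⊓ f y) ∧
  (∀ x y : A, f (x ⊔ y) = f x ⊔ f y)

/-- A state of a boolean algebra: a `[0,1]`-valued, normalized, finitely additive
function. -/
def IsState {A : Type*} [BooleanAlgebra A] (σ : A → ℝ) : Prop :=
  (∀ x : A, 0 ≤ σ x ∧ σ x ≤ 1) ∧ σ ⊤ = 1 ∧
  ∀ x y : A, x ⊓ y = ⊥ → σ (x ⊔ y) = σ x + σ y

section Aux
variable {A : Type*} [BooleanAlgebra A]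

lemma isState_bot {σ : A → ℝ} (h : IsState σ) : σ ⊥ = 0 := by
  have := h.2.2 ⊥ ⊥ (by simp)
  simp only [sup_idem] at this
  linarith

lemma hom_bot {η : A → Bool} (h : IsBAHom η) : η ⊥ = false := by
  have h1 : η ⊥ = η ⊤ ⊓ (η ⊤)ᶜ := by rw [← h.1, ← h.2.1]; simp
  simp at h1; exact h1

lemma hom_top {η : A → Bool} (h : IsBAHom η) : η ⊤ = true := by
  have h1 : η ⊤ = (η ⊥)ᶜ := by rw [← h.1]; simp
  rw [h1, hom_bot h]; rfl

/-- the indicator of a boolean homomorphism is a state -/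
lemma hom_isState {η : A → Bool} (h : IsBAHom η) :
    IsState (fun x => if η x then (1:ℝ) else 0) := by
  refine ⟨fun x => ?_, by simp [hom_top h], fun x y hxy => ?_⟩
  · dsimp only; split <;> norm_num
  have h1 : η x ⊓ η y = false := by rw [← h.2.1, hxy, hom_bot h]
  have h2 : η (x ⊔ y) = η x ⊔ η y := h.2.2 x y
  cases hx : η x <;> cases hy : η y <;> simp [hx, hy] at h1 h2 ⊢ <;> simp [h2]

/-- for an atom `a`, `x ↦ a ≤ x` is a boolean homomorphism -/
lemma atom_hom {a : A} (ha : IsAtom a) [DecidableRel ((· ≤ ·) : A → A → Prop)] :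
    IsBAHom (fun x => decide (a ≤ x)) := by
  have key : ∀ x : A, ¬ a ≤ x ↔ a ≤ xᶜ := by
    intro x
    constructor
    · intro hx
      rcases ha.le_iff.mp (inf_le_left : a ⊓ x ≤ a) with h | h
      · exact le_compl_iff_disjoint_right.mpr (disjoint_iff.mpr h)
      · exact absurd (h ▸ inf_le_right : a ≤ x) hx
    · intro hc hx
      exact ha.1 (le_bot_iff.mp (by simpa using le_inf hx hc))
  have hsup : ∀ x y : A, a ≤ x ⊔ y ↔ a ≤ x ∨ a ≤ y := by
    intro x y
    constructor
    · intro hxy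
      by_cases hx : a ≤ x
      · exact Or.inl hx
      · refine Or.inr ?_
        have hc : a ≤ xᶜ := (key x).mp hx
        have h1 : a ≤ (x ⊔ y) ⊓ xᶜ := le_inf hxy hc
        have h2 : (x ⊔ y) ⊓ xᶜ ≤ y := by
          rw [inf_comm, inf_sup_left]
          simp
        exact h1.trans h2
    · rintro (h | h) <;> [exact h.trans le_sup_left; exact h.trans le_sup_right]
  refine ⟨fun x => ?_, fun x y => ?_, fun x y => ?_⟩
  · by_cases hx : a ≤ x
    · have : ¬ a ≤ xᶜ := fun hc => ((key x).mpr hc) hx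
      simp [hx, this]
    · have := (key x).mp hx
      simp [hx, this]
  · by_cases hx : a ≤ x <;> by_cases hy : a ≤ y <;>
      simp [le_inf_iff, hx, hy] <;> rfl
  · by_cases hx : a ≤ x <;> by_cases hy : a ≤ y <;>
      simp [hsup, hx, hy] <;> rfl

end Aux

open Finset in
lemma state_sum {A : Type*} [BooleanAlgebra A] [Fintype A] [DecidableEq A]
    [DecidablePred (IsAtom : A → Prop)] [DecidableRel ((· ≤ ·) : A → A → Prop)]
    {σ : A → ℝ} (hσ : IsState σ) :
    ∀ x : A, σ x = ∑ a ∈ univ.filter (fun a => IsAtom a ∧ a ≤ x), σ a := by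
  suffices H : ∀ n (x : A), (univ.filter (fun a => IsAtom a ∧ a ≤ x)).card = n →
      σ x = ∑ a ∈ univ.filter (fun a => IsAtom a ∧ a ≤ x), σ a from
    fun x => H _ x rfl
  intro n
  induction n using Nat.strong_induction_on with
  | _ n ih =>
    intro x hn
    by_cases hx : x = ⊥
    · subst hx
      have he : (univ.filter fun a : A => IsAtom a ∧ a ≤ (⊥:A)) = ∅ := by
        ext a
        simp only [mem_filter, mem_univ, true_and, notMem_empty, iff_false, not_and]
        exact fun ha hle => ha.1 (le_bot_iff.mp hle)
      rw [he, sum_empty, isState_bot hσ]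
    · obtain ⟨a, ha, hax⟩ := (eq_bot_or_exists_atom_le x).resolve_left hx
      have hdec : x = a ⊔ (x ⊓ aᶜ) := by
        rw [sup_inf_left]
        simp [sup_eq_right.mpr hax]
      have hdisj : a ⊓ (x ⊓ aᶜ) = ⊥ := by
        rw [inf_comm x aᶜ, ← inf_assoc]
        simp
      have hfil : (univ.filter fun b : A => IsAtom b ∧ b ≤ x) =
          insert a (univ.filter fun b : A => IsAtom b ∧ b ≤ x ⊓ aᶜ) := by
        ext b
        simp only [mem_filter, mem_univ, true_and, mem_insert, le_inf_iff]
        constructor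
        · rintro ⟨hb, hbx⟩
          by_cases hba : b = a
          · exact Or.inl hba
          · exact Or.inr ⟨hb, hbx, le_compl_iff_disjoint_right.mpr (hb.disjoint_of_ne ha hba)⟩
        · rintro (rfl | ⟨hb, hbx, _⟩)
          · exact ⟨ha, hax⟩
          · exact ⟨hb, hbx⟩
      have hnotmem : a ∉ univ.filter fun b : A => IsAtom b ∧ b ≤ x ⊓ aᶜ := by
        simp only [mem_filter, mem_univ, true_and, le_inf_iff, not_and]
        intro _ _ hc
        exact ha.1 (le_bot_iff.mp (by simpa using le_inf le_rfl hc))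
      have hcard : (univ.filter fun b : A => IsAtom b ∧ b ≤ x ⊓ aᶜ).card + 1 = n := by
        rw [← hn, hfil, card_insert_of_notMem hnotmem]
      calc σ x = σ (a ⊔ (x ⊓ aᶜ)) := by rw [← hdec]
        _ = σ a + σ (x ⊓ aᶜ) := hσ.2.2 _ _ hdisj
        _ = σ a + ∑ b ∈ univ.filter fun b : A => IsAtom b ∧ b ≤ x ⊓ aᶜ, σ b := by
            rw [← ih _ (by omega) _ rfl]
        _ = ∑ b ∈ univ.filter fun b : A => IsAtom b ∧ b ≤ x, σ b := by
            rw [hfil, sum_insert hnotmem]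

open Finset in
lemma exclusion {A : Type*} [BooleanAlgebra A] [Fintype A]
    (E : Finset A) (β : A → ℝ)
    (hs : ∃ s : A → ℝ, ∀ η : A → Bool, IsBAHom η →
        ∑ h ∈ E, s h * (β h - (if η h then 1 else 0)) < 0)
    (hst : ∃ σ : A → ℝ, IsState σ ∧ ∀ h ∈ E, σ h = β h) : False := by
  classical
  obtain ⟨s, hs⟩ := hs
  obtain ⟨σ, hσ, hext⟩ := hst
  set At : Finset A := univ.filter (fun a : A => IsAtom a) with hAt
  have hmass : ∑ a ∈ At, σ a = 1 := by
    have h1 := state_sum hσ ⊤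
    rw [hσ.2.1] at h1
    simpa [hAt, le_top] using h1.symm
  have hσh : ∀ h : A, σ h = ∑ a ∈ At, σ a * (if a ≤ h then 1 else 0) := by
    intro h
    rw [state_sum hσ h, ← Finset.filter_filter, Finset.sum_filter]
    exact Finset.sum_congr rfl fun a _ => by split <;> ring
  have hkey : ∀ h ∈ E,
      ∑ a ∈ At, σ a * (s h * (β h - (if a ≤ h then 1 else 0))) = 0 := by
    intro h hh
    have expand : ∀ a : A, σ a * (s h * (β h - (if a ≤ h then 1 else 0)))
        = s h * β h * σ a - s h * (σ a * (if a ≤ h then 1 else 0)) := fun a => by ring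
    simp_rw [expand]
    rw [Finset.sum_sub_distrib, ← Finset.mul_sum, ← Finset.mul_sum, hmass, ← hσh h,
      hext h hh]
    ring
  have hc : ∀ a ∈ At, (∑ h ∈ E, s h * (β h - (if a ≤ h then 1 else 0))) < 0 := by
    intro a haAt
    have ha : IsAtom a := by simpa [hAt] using haAt
    have h2 := hs (fun x => decide (a ≤ x)) (atom_hom ha)
    simpa using h2
  have hsum0 : ∑ a ∈ At, σ a * (∑ h ∈ E, s h * (β h - (if a ≤ h then 1 else 0))) = 0 := by
    simp_rw [Finset.mul_sum]
    rw [Finset.sum_comm]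
    exact Finset.sum_eq_zero hkey
  have hex : ∃ a ∈ At, 0 < σ a := by
    by_contra hcon
    push_neg at hcon
    have hz : ∑ a ∈ At, σ a = 0 :=
      Finset.sum_eq_zero fun a haA => le_antisymm (hcon a haA) (hσ.1 a).1
    rw [hmass] at hz; norm_num at hz
  obtain ⟨a0, ha0A, ha0⟩ := hex
  have hlt : ∑ a ∈ At, σ a * (∑ h ∈ E, s h * (β h - (if a ≤ h then 1 else 0)))
      < ∑ _a ∈ At, (0:ℝ) :=
    Finset.sum_lt_sum
      (fun a haA => mul_nonpos_iff.mpr (Or.inl ⟨(hσ.1 a).1, (hc a haA).le⟩))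
      ⟨a0, ha0A, mul_neg_of_pos_of_neg ha0 (hc a0 ha0A)⟩
  rw [hsum0] at hlt
  simp at hlt

open Finset in
lemma existence {A : Type*} [BooleanAlgebra A] [Fintype A]
    (E : Finset A) (β : A → ℝ)
    (hno : ¬ ∃ σ : A → ℝ, IsState σ ∧ ∀ h ∈ E, σ h = β h) :
    ∃ s : A → ℝ, ∀ η : A → Bool, IsBAHom η →
      ∑ h ∈ E, s h * (β h - (if η h then 1 else 0)) < 0 := by
  classical
  set Φ : (A → Bool) → (↥E → ℝ) := fun η e => if η e.1 then 1 else 0 with hΦ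
  set H : Finset (A → Bool) := univ.filter IsBAHom with hH
  set S : Finset (↥E → ℝ) := H.image Φ with hS
  set β' : ↥E → ℝ := fun e => β e.1 with hβ'
  have hβnot : β' ∉ convexHull ℝ (S : Set (↥E → ℝ)) := by
    intro hmem
    rw [Finset.convexHull_eq] at hmem
    obtain ⟨w, hw0, hw1, hwc⟩ := hmem
    have hch : ∀ v ∈ S, ∃ η, IsBAHom η ∧ Φ η = v := by
      intro v hv
      rw [hS] at hv
      simp only [mem_image, hH, mem_filter, mem_univ, true_and] at hv
      obtain ⟨η, hη, rfl⟩ := hv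
      exact ⟨η, hη, rfl⟩
    choose! g hg1 hg2 using hch
    have hcm : ∑ v ∈ S, w v • v = β' := by
      rw [Finset.centerMass_eq_of_sum_1 S id hw1] at hwc
      simpa using hwc
    refine hno ⟨fun x => ∑ v ∈ S, w v * (if g v x then 1 else 0), ⟨?_, ?_, ?_⟩, ?_⟩
    · intro x
      constructor
      · exact Finset.sum_nonneg fun v hv =>
          mul_nonneg (hw0 v hv) (by split <;> norm_num)
      · calc ∑ v ∈ S, w v * (if g v x then (1:ℝ) else 0)
            ≤ ∑ v ∈ S, w v := Finset.sum_le_sum fun v hv => by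
              have := hw0 v hv; split <;> nlinarith
          _ = 1 := hw1
    · dsimp only
      have : ∀ v ∈ S, w v * (if g v ⊤ then (1:ℝ) else 0) = w v := by
        intro v hv
        rw [hom_top (hg1 v hv)]
        simp
      rw [Finset.sum_congr rfl this, hw1]
    · intro x y hxy
      dsimp only
      rw [← Finset.sum_add_distrib]
      refine Finset.sum_congr rfl fun v hv => ?_
      have := (hom_isState (hg1 v hv)).2.2 x y hxy
      simp only at this
      rw [this]
      ring
    · intro h hh
      have happ := congrFun hcm ⟨h, hh⟩
      rw [Finset.sum_apply] at happ
      simp only [Pi.smul_apply, smul_eq_mul] at happ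
      have hb : β' ⟨h, hh⟩ = β h := rfl
      rw [hb] at happ
      dsimp only
      rw [← happ]
      refine Finset.sum_congr rfl fun v hv => ?_
      congr 1
      conv_rhs => rw [← hg2 v hv]
  obtain ⟨f, u, hfβ, hfS⟩ := geometric_hahn_banach_point_closed
    (convex_convexHull ℝ _) ((S : Set (↥E → ℝ)).toFinite.isCompact_convexHull ℝ |>.isClosed) hβnot
  refine ⟨fun x => if hx : x ∈ E then f (fun j => if (⟨x, hx⟩ : ↥E) = j then 1 else 0) else 0,
    fun η hη => ?_⟩
  have hηS : Φ η ∈ S := Finset.mem_image_of_mem Φ (by simp [hH, hη])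
  have hfη : u < f (Φ η) := hfS _ (subset_convexHull ℝ _ (by exact_mod_cast hηS))
  have hlin : f (β' - Φ η) = ∑ e : ↥E, (β' - Φ η) e • f (fun j => if e = j then 1 else 0) :=
    LinearMap.pi_apply_eq_sum_univ (f : (↥E → ℝ) →ₗ[ℝ] ℝ) _
  have hsum : ∑ h ∈ E,
      (fun x => if hx : x ∈ E then f (fun j => if (⟨x, hx⟩ : ↥E) = j then 1 else 0) else 0) h
        * (β h - (if η h then 1 else 0)) = f (β' - Φ η) := by
    rw [hlin, ← Finset.sum_coe_sort E]
    refine Finset.sum_congr rfl fun e _ => ?_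
    simp only [dif_pos e.2, Pi.sub_apply, hβ', hΦ, smul_eq_mul]
    rw [Subtype.coe_eta]
    ring
  rw [hsum, map_sub]
  linarith

theorem stmt_17 (A : Type*) [BooleanAlgebra A] [Fintype A] [Nontrivial A]
    (E : Finset A) (β : A → ℝ) (hβ : ∀ h ∈ E, 0 ≤ β h ∧ β h ≤ 1) :
    Xor'
      (∃ s : A → ℝ, ∀ η : A → Bool, IsBAHom η →
        ∑ h ∈ E, s h * (β h - (if η h then 1 else 0)) < 0)
      (∃ σ : A → ℝ, IsState σ ∧ ∀ h ∈ E, σ h = β h) := by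
  by_cases hq : ∃ σ : A → ℝ, IsState σ ∧ ∀ h ∈ E, σ h = β h
  · exact Or.inr ⟨hq, fun hp => exclusion E β hp hq⟩
  · exact Or.inl ⟨existence E β hq, hq⟩
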